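/- Let α ∈ (0,1). There exist a 2π-periodic function a of Hölder class C^α and 2π-periodic Lipschitz functions b_n, b with b_n → b in the W^{1,∞} norm such that the Hölder seminorm [a∘b_n - a∘b]_α ≥ 2 for all n ≥ 1; hence the composition map b ↦ a∘b from W^{1,∞}(𝕊) to C^α(𝕊) is not continuous at b. Concretely one may take a the 2π-periodic extension of x ↦ |x|^α φ(x), b the extension of x ↦ x φ(x), and b_n the extension of x ↦ (x+1/n) φ(x), where φ ∈ C_0^∞(ℝ) equals 1 on [-1,1] and 0 outside [-2,2]. -/

import Mathlib

open Set Filter Topology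

lemma real_rpow_add_le {x y p : ℝ} (hx : 0 ≤ x) (hy : 0 ≤ y) (hp : 0 ≤ p) (hp1 : p ≤ 1) :
    (x + y) ^ p ≤ x ^ p + y ^ p := by
  have h := NNReal.rpow_add_le_add_rpow x.toNNReal y.toNNReal hp hp1
  rw [← Real.toNNReal_add hx hy] at h
  have h2 := NNReal.coe_le_coe.2 h
  rw [NNReal.coe_add, NNReal.coe_rpow, NNReal.coe_rpow, NNReal.coe_rpow,
    Real.coe_toNNReal _ hx, Real.coe_toNNReal _ hy,
    Real.coe_toNNReal _ (by positivity : (0:ℝ) ≤ x + y)] at h2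
  exact h2

lemma abs_rpow_sub_rpow_le {s t p : ℝ} (hs : 0 ≤ s) (ht : 0 ≤ t) (hp : 0 ≤ p) (hp1 : p ≤ 1) :
    |s ^ p - t ^ p| ≤ |s - t| ^ p := by
  have key : ∀ u v : ℝ, 0 ≤ u → 0 ≤ v → v ≤ u → u ^ p - v ^ p ≤ (u - v) ^ p := by
    intro u v hu hv huv
    have h := real_rpow_add_le (by linarith : (0:ℝ) ≤ u - v) hv hp hp1
    rw [sub_add_cancel] at h
    linarith
  rcases le_total t s with h | h
  · rw [abs_of_nonneg (by linarith : (0:ℝ) ≤ s - t),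
      abs_of_nonneg (by linarith [Real.rpow_le_rpow ht h hp] : (0:ℝ) ≤ s ^ p - t ^ p)]
    exact key s t hs ht h
  · rw [abs_of_nonpos (by linarith : s - t ≤ 0),
      abs_of_nonpos (by linarith [Real.rpow_le_rpow hs h hp] : s ^ p - t ^ p ≤ 0), neg_sub, neg_sub]
    exact key t s ht hs h

/-- Lemma A.2 (i): for `α ∈ (0,1)` there are a `2π`-periodic `α`-Hölder function `a`
and `2π`-periodic Lipschitz functions `b_n → b` in `W^{1,∞}` such that the Hölder
seminorm of `a∘b_n - a∘b` is at least `2` for every `n ≥ 1`; in particular the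
composition map `b ↦ a∘b` from `W^{1,∞}(𝕊)` to `C^α(𝕊)` is not continuous at `b`. -/
theorem stmt3 (α : ℝ) (hα : α ∈ Ioo (0:ℝ) 1) :
    ∃ (a b : ℝ → ℝ) (bn : ℕ → ℝ → ℝ) (C : ℝ),
      Function.Periodic a (2 * Real.pi) ∧
      (∀ x y : ℝ, |a x - a y| ≤ C * |x - y| ^ α) ∧
      Function.Periodic b (2 * Real.pi) ∧ (∃ L : NNReal, LipschitzWith L b) ∧
      (∀ n, Function.Periodic (bn n) (2 * Real.pi) ∧ ∃ L : NNReal, LipschitzWith L (bn n)) ∧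
      (∀ δ > (0:ℝ), ∃ N : ℕ, ∀ n ≥ N,
        (∀ x, |bn n x - b x| ≤ δ) ∧
        LipschitzWith δ.toNNReal (fun x => bn n x - b x)) ∧
      (∀ n ≥ 1, ∃ x y : ℝ, x ≠ y ∧
        2 * |x - y| ^ α ≤ |(a (bn n x) - a (b x)) - (a (bn n y) - a (b y))|) := by
  obtain ⟨hα0, hα1⟩ := hα
  have hπ := Real.pi_gt_three
  set S : Set ℝ := Set.range (fun k : ℤ => 2 * Real.pi * k) with hS
  have h0S : (0:ℝ) ∈ S := ⟨0, by simp⟩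
  have hSne : S.Nonempty := ⟨0, h0S⟩
  set d : ℝ → ℝ := fun x => Metric.infDist x S with hd
  -- d is 1-Lipschitz in the sense of absolute values
  have hdlip : ∀ x y : ℝ, |d x - d y| ≤ |x - y| := by
    intro x y
    rw [abs_sub_le_iff]
    constructor
    · have := Metric.infDist_le_infDist_add_dist (x := x) (y := y) (s := S)
      rw [Real.dist_eq] at this; linarith
    · have := Metric.infDist_le_infDist_add_dist (x := y) (y := x) (s := S)
      rw [Real.dist_eq, abs_sub_comm] at this; linarith
  -- periodicity of d
  have hkey : ∀ (t : ℝ), (∀ y ∈ S, y + t ∈ S) → ∀ x, d (x + t) ≤ d x := by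
    intro t ht x
    refine le_of_forall_pos_le_add ?_
    intro ε hε
    obtain ⟨y, hyS, hy⟩ := (Metric.infDist_lt_iff hSne).1
      (show Metric.infDist x S < d x + ε from lt_add_of_pos_right _ hε)
    calc d (x + t) ≤ dist (x + t) (y + t) := Metric.infDist_le_dist_of_mem (ht y hyS)
      _ = dist x y := by rw [Real.dist_eq, Real.dist_eq]; ring_nf
      _ ≤ d x + ε := hy.le
  have hmem1 : ∀ y ∈ S, y + 2 * Real.pi ∈ S := by
    rintro y ⟨k, rfl⟩; exact ⟨k + 1, by push_cast; ring⟩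
  have hmem2 : ∀ y ∈ S, y + -(2 * Real.pi) ∈ S := by
    rintro y ⟨k, rfl⟩; exact ⟨k - 1, by push_cast; ring⟩
  have hdper : ∀ x, d (x + 2 * Real.pi) = d x := by
    intro x
    refine le_antisymm (hkey _ hmem1 x) ?_
    have := hkey _ hmem2 (x + 2 * Real.pi)
    simpa using this
  have hd0 : d 0 = 0 := Metric.infDist_zero_of_mem h0S
  -- value of d on [-1,1]
  have hdval : ∀ c : ℝ, |c| ≤ 1 → d c = |c| := by
    intro c hc
    refine le_antisymm ?_ ?_
    · have := Metric.infDist_le_dist_of_mem (x := c) h0S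
      simpa [Real.dist_eq] using this
    · by_contra h
      push_neg at h
      obtain ⟨y, hyS, hy⟩ := (Metric.infDist_lt_iff hSne).1 h
      obtain ⟨k, rfl⟩ := hyS
      rw [Real.dist_eq] at hy
      rcases eq_or_ne k 0 with rfl | hk
      · simp at hy
      · have hk1 : (1:ℝ) ≤ |(k:ℝ)| := by
          have := Int.one_le_abs (by omega : k ≠ 0)
          exact_mod_cast this
        have h2k : 2 * Real.pi ≤ |2 * Real.pi * k| := by
          rw [abs_mul, abs_of_nonneg (by positivity : (0:ℝ) ≤ 2 * Real.pi)]
          nlinarith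
        have : |2 * Real.pi * k| - |c| ≤ |c - 2 * Real.pi * k| := by
          have := abs_sub_abs_le_abs_sub c (2 * Real.pi * (k:ℝ))
          have := abs_sub_abs_le_abs_sub (2 * Real.pi * (k:ℝ)) c
          rw [abs_sub_comm] at this
          linarith
        nlinarith
  -- the functions
  set a : ℝ → ℝ := fun x => d x ^ α with ha
  set b : ℝ → ℝ := fun x => -min (d x) 1 with hb
  set bn : ℕ → ℝ → ℝ := fun n x => b x + 1 / (n : ℝ) with hbn
  have hblip : LipschitzWith 1 b := by
    refine LipschitzWith.of_dist_le_mul fun x y => ?_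
    rw [Real.dist_eq, Real.dist_eq, NNReal.coe_one, one_mul]
    have h1 : |b x - b y| = |min (d x) 1 - min (d y) 1| := by
      rw [hb]; rw [show -min (d x) 1 - -min (d y) 1 = -(min (d x) 1 - min (d y) 1) by ring,
        abs_neg]
    rw [h1]
    calc |min (d x) 1 - min (d y) 1| ≤ max |d x - d y| |1 - 1| :=
          abs_min_sub_min_le_max _ _ _ _
      _ = |d x - d y| := by simp [le_max_iff, abs_nonneg]
      _ ≤ |x - y| := hdlip x y
  have hbper : Function.Periodic b (2 * Real.pi) := fun x => by simp [hb, hdper x]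
  refine ⟨a, b, bn, 1, ?_, ?_, hbper, ⟨1, hblip⟩, ?_, ?_, ?_⟩
  · -- a periodic
    intro x; simp [ha, hdper x]
  · -- Hölder bound
    intro x y
    rw [one_mul]
    have h1 : |d x ^ α - d y ^ α| ≤ |d x - d y| ^ α :=
      abs_rpow_sub_rpow_le Metric.infDist_nonneg Metric.infDist_nonneg hα0.le hα1.le
    have h2 : |d x - d y| ^ α ≤ |x - y| ^ α :=
      Real.rpow_le_rpow (abs_nonneg _) (hdlip x y) hα0.le
    exact h1.trans h2
  · -- bn periodic and Lipschitz
    intro n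
    refine ⟨fun x => by simp [hbn, hbper x], 1, ?_⟩
    refine LipschitzWith.of_dist_le_mul fun x y => ?_
    have := hblip.dist_le_mul x y
    simpa [hbn, Real.dist_eq, add_sub_add_right_eq_sub] using this
  · -- convergence
    intro δ hδ
    obtain ⟨N₀, hN₀⟩ := exists_nat_one_div_lt hδ
    refine ⟨N₀ + 1, fun n hn => ?_⟩
    have hn1 : 1 ≤ n := le_trans (Nat.le_add_left 1 N₀) hn
    have hnR : (N₀:ℝ) + 1 ≤ (n:ℝ) := by exact_mod_cast hn
    have hnpos : (0:ℝ) < n := by positivity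
    have hle : 1 / (n:ℝ) ≤ 1 / ((N₀:ℝ) + 1) := by
      apply one_div_le_one_div_of_le (by positivity) hnR
    have hδn : 1 / (n:ℝ) ≤ δ := le_of_lt (lt_of_le_of_lt hle hN₀)
    constructor
    · intro x
      have : bn n x - b x = 1 / (n:ℝ) := by simp [hbn]
      rw [this, abs_of_nonneg (by positivity)]
      exact hδn
    · have : (fun x : ℝ => bn n x - b x) = fun _ => 1 / (n:ℝ) := by
        funext x; simp [hbn]
      rw [this]
      exact (LipschitzWith.const _).weaken zero_le
  · -- the quantitative lower bound
    intro n hn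
    set c : ℝ := 1 / (n:ℝ) with hc
    have hn1 : (1:ℝ) ≤ n := by exact_mod_cast hn
    have hcpos : 0 < c := by rw [hc]; positivity
    have hc1 : c ≤ 1 := by
      rw [hc]; rw [div_le_one (by linarith)]; exact hn1
    refine ⟨0, -c, by intro h; nlinarith [h], ?_⟩
    have hdc : d c = c := by
      rw [hdval c (by rw [abs_of_pos hcpos]; exact hc1), abs_of_pos hcpos]
    have hdnc : d (-c) = c := by
      rw [hdval (-c) (by rw [abs_neg, abs_of_pos hcpos]; exact hc1), abs_neg,
        abs_of_pos hcpos]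
    have hb0 : b 0 = 0 := by simp [hb, hd0]
    have hbnc : b (-c) = -c := by
      simp [hb, hdnc, min_eq_left hc1]
    have hbn0 : bn n 0 = c := by simp [hbn, hb0, hc]
    have hbnnc : bn n (-c) = 0 := by
      rw [hbn]; simp only [hbnc]; rw [hc]; ring
    have ha0 : a 0 = 0 := by
      simp [ha, hd0, Real.zero_rpow (ne_of_gt hα0)]
    have hac : a c = c ^ α := by simp [ha, hdc]
    have hanc : a (-c) = c ^ α := by simp [ha, hdnc]
    have hcα : 0 ≤ c ^ α := Real.rpow_nonneg hcpos.le α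
    rw [hbn0, hbnnc, hb0, hbnc, ha0, hac, hanc]
    have h1 : |(0:ℝ) - -c| = c := by rw [abs_of_pos (by linarith : (0:ℝ) < 0 - -c)]; ring
    rw [h1]
    have h2 : |c ^ α - 0 - (0 - c ^ α)| = 2 * c ^ α := by
      rw [show c ^ α - 0 - (0 - c ^ α) = 2 * c ^ α by ring, abs_of_nonneg (by linarith)]
    rw [h2]
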